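/- Let n ≥ 1 and define P : ℝ → ℝ^{4n} → ℝ³ → ℂ by P t x z := ∫_{τ ∈ ℝ³} exp( -( i·⟨τ, z⟩ + (1/2)·‖τ‖·(cosh ‖τ‖ / sinh ‖τ‖)·‖x‖² ) / t ) · ( ‖τ‖ / sinh ‖τ‖ )^{2n} dτ. Let 0 < s < 1, α, β, γ, δ ∈ {1,…,4n} and i, j ∈ {1,2,3}, and assume it is NOT the case that i = j and at least one of the pairings (α = β and γ = δ), (α = γ and β = δ), (α = δ and β = γ) holds. Then ∫_{(x,z) ∈ ℝ^{4n} × ℝ³} P (1-s) x z · x_α · x_β · x_γ · x_δ · (∂_{z_i}∂_{z_j} P) s x z d(x,z) = 0, where ∂_{z_i}∂_{z_j}P s x z denotes the second-order partial derivative of the map z ↦ P s x z in the i-th and j-th coordinate directions, x_α is the α-th coordinate of x, and the integral is over ℝ^{4n} × ℝ³ with Lebesgue measure. -/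

import Mathlib

open RealInnerProductSpace MeasureTheory

/-- The Beals–Gaveau–Greiner heat kernel (unnormalized) of the intrinsic sublaplacian on
the quaternionic Heisenberg group. -/
noncomputable def bggKernel (n : ℕ) (t : ℝ) (x : EuclideanSpace ℝ (Fin (4 * n)))
    (z : EuclideanSpace ℝ (Fin 3)) : ℂ :=
  ∫ τ : EuclideanSpace ℝ (Fin 3),
    Complex.exp (-((Complex.I * ((⟪τ, z⟫ : ℝ) : ℂ) +
        (((1 / 2 : ℝ) * ‖τ‖ * (Real.cosh ‖τ‖ / Real.sinh ‖τ‖) * ‖x‖ ^ 2 : ℝ) : ℂ)) /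
        (t : ℂ))) *
      (((‖τ‖ / Real.sinh ‖τ‖ : ℝ) : ℂ)) ^ (2 * n)

/-- Negation of the `k`-th coordinate, as a linear isometry equivalence. -/
noncomputable def negCoord {m : ℕ} (k : Fin m) :
    EuclideanSpace ℝ (Fin m) ≃ₗᵢ[ℝ] EuclideanSpace ℝ (Fin m) where
  toLinearEquiv :=
    { toFun := fun x => WithLp.toLp 2 (fun l => if l = k then -x l else x l)
      invFun := fun x => WithLp.toLp 2 (fun l => if l = k then -x l else x l)
      map_add' := by
        intro x y
        ext l
        by_cases h : l = k <;> simp [h, PiLp.add_apply] <;> ring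
      map_smul' := by
        intro c x
        ext l
        by_cases h : l = k <;> simp [h, PiLp.smul_apply, smul_eq_mul] <;> ring
      left_inv := by
        intro x
        ext l
        by_cases h : l = k <;> simp [h]
      right_inv := by
        intro x
        ext l
        by_cases h : l = k <;> simp [h] }
  norm_map' := by
    intro x
    rw [EuclideanSpace.norm_eq, EuclideanSpace.norm_eq]
    congr 1
    refine Finset.sum_congr rfl fun l _ => ?_
    by_cases h : l = k <;> simp [h]

lemma negCoord_apply {m : ℕ} (k : Fin m) (x : EuclideanSpace ℝ (Fin m)) (l : Fin m) :
    negCoord k x l = if l = k then -x l else x l := rfl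

lemma negCoord_single_self {m : ℕ} (k : Fin m) :
    negCoord k (EuclideanSpace.single k (1 : ℝ)) = -EuclideanSpace.single k (1 : ℝ) := by
  ext l
  by_cases h : l = k <;>
    simp [negCoord_apply, h, EuclideanSpace.single_apply, PiLp.neg_apply]

lemma negCoord_single_ne {m : ℕ} {k j : Fin m} (h : j ≠ k) :
    negCoord k (EuclideanSpace.single j (1 : ℝ)) = EuclideanSpace.single j (1 : ℝ) := by
  ext l
  by_cases hl : l = k
  · subst hl
    simp [negCoord_apply, EuclideanSpace.single_apply, Ne.symm h]
  · simp [negCoord_apply, hl]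

/-- The kernel depends on `x` only through its norm. -/
lemma bggKernel_norm_congr (n : ℕ) (t : ℝ) {x x' : EuclideanSpace ℝ (Fin (4 * n))}
    (h : ‖x'‖ = ‖x‖) (z : EuclideanSpace ℝ (Fin 3)) :
    bggKernel n t x' z = bggKernel n t x z := by
  simp only [bggKernel, h]

/-- The kernel is invariant under linear isometries of the `z` variable. -/
lemma bggKernel_isometry (n : ℕ) (t : ℝ) (x : EuclideanSpace ℝ (Fin (4 * n)))
    (e : EuclideanSpace ℝ (Fin 3) ≃ₗᵢ[ℝ] EuclideanSpace ℝ (Fin 3))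
    (z : EuclideanSpace ℝ (Fin 3)) :
    bggKernel n t x (e z) = bggKernel n t x z := by
  unfold bggKernel
  rw [← e.measurePreserving.integral_comp e.toHomeomorph.measurableEmbedding]
  simp only [LinearIsometryEquiv.inner_map_map, LinearIsometryEquiv.norm_map]

/-- If the pairing conditions all fail, some coordinate occurs an odd number of times. -/
lemma exists_odd_sign {m : ℕ} (α β γ δ : Fin m)
    (h : ¬((α = β ∧ γ = δ) ∨ (α = γ ∧ β = δ) ∨ (α = δ ∧ β = γ))) :
    ∃ k : Fin m, ((if α = k then (-1 : ℝ) else 1) * (if β = k then (-1 : ℝ) else 1) *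
      (if γ = k then (-1 : ℝ) else 1) * (if δ = k then (-1 : ℝ) else 1)) = -1 := by
  push_neg at h
  by_cases hab : α = β <;> by_cases hag : α = γ <;> by_cases had : α = δ <;>
    by_cases hbg : β = γ <;> by_cases hbd : β = δ <;> by_cases hgd : γ = δ <;>
    first
      | (refine ⟨α, ?_⟩; simp_all [eq_comm]; done)
      | (refine ⟨β, ?_⟩; simp_all [eq_comm]; done)
      | (refine ⟨γ, ?_⟩; simp_all [eq_comm]; done)
      | (refine ⟨δ, ?_⟩; simp_all [eq_comm]; done)
      | (exfalso; tauto)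

/-- Formula (4) in the proof of Theorem 5.7: unless `i = j` and the horizontal indices
`α, β, γ, δ` pair up, the fourth-moment integral
`∫ P(1-s, x, z) · x_α x_β x_γ x_δ · ∂_{z_i}∂_{z_j} P(s, x, z) d(x, z)` vanishes. -/
theorem integral_xxxx_dzdz_bggKernel_eq_zero
    (n : ℕ) (hn : 1 ≤ n) (s : ℝ) (hs0 : 0 < s) (hs1 : s < 1)
    (α β γ δ : Fin (4 * n)) (i j : Fin 3)
    (hpair : ¬(i = j ∧
      ((α = β ∧ γ = δ) ∨ (α = γ ∧ β = δ) ∨ (α = δ ∧ β = γ)))) :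
    ∫ p : EuclideanSpace ℝ (Fin (4 * n)) × EuclideanSpace ℝ (Fin 3),
      bggKernel n (1 - s) p.1 p.2 * (p.1 α : ℂ) * (p.1 β : ℂ) * (p.1 γ : ℂ) *
          (p.1 δ : ℂ) *
        fderiv ℝ (fun z => fderiv ℝ (fun z' => bggKernel n s p.1 z') z
            (EuclideanSpace.single j 1)) p.2 (EuclideanSpace.single i 1)
      = 0 := by
  set f : EuclideanSpace ℝ (Fin (4 * n)) × EuclideanSpace ℝ (Fin 3) → ℂ := fun p =>
    bggKernel n (1 - s) p.1 p.2 * (p.1 α : ℂ) * (p.1 β : ℂ) * (p.1 γ : ℂ) *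
        (p.1 δ : ℂ) *
      fderiv ℝ (fun z => fderiv ℝ (fun z' => bggKernel n s p.1 z') z
          (EuclideanSpace.single j 1)) p.2 (EuclideanSpace.single i 1) with hf
  suffices hsuff : (∫ p, f p) = -∫ p, f p by
    have := CharZero.eq_neg_self_iff.mp hsuff
    simpa [hf] using this
  by_cases hij : i = j
  · -- pairing fails; reflect an odd coordinate of x
    have hp : ¬((α = β ∧ γ = δ) ∨ (α = γ ∧ β = δ) ∨ (α = δ ∧ β = γ)) := fun hc =>
      hpair ⟨hij, hc⟩
    obtain ⟨k, hk⟩ := exists_odd_sign α β γ δ hp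
    set r := negCoord k with hr
    have hmp : MeasurePreserving
        (Prod.map (⇑r) (id : EuclideanSpace ℝ (Fin 3) → EuclideanSpace ℝ (Fin 3)))
        volume volume := by
      rw [MeasureTheory.Measure.volume_eq_prod]
      exact r.measurePreserving.prod (MeasurePreserving.id volume)
    have hme : MeasurableEmbedding
        (Prod.map (⇑r) (id : EuclideanSpace ℝ (Fin 3) → EuclideanSpace ℝ (Fin 3))) :=
      r.toHomeomorph.measurableEmbedding.prodMap MeasurableEmbedding.id
    have hcomp : ∀ p, f (Prod.map (⇑r) id p) = -f p := by
      intro p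
      have hnorm : ‖r p.1‖ = ‖p.1‖ := r.norm_map p.1
      have h1 : bggKernel n (1 - s) (r p.1) p.2 = bggKernel n (1 - s) p.1 p.2 :=
        bggKernel_norm_congr n (1 - s) hnorm p.2
      have h2 : (fun z' => bggKernel n s (r p.1) z') = fun z' => bggKernel n s p.1 z' := by
        funext z'
        exact bggKernel_norm_congr n s hnorm z'
      have hcoord : ∀ μ : Fin (4 * n),
          ((r p.1 μ : ℝ) : ℂ) = ((if μ = k then (-1 : ℝ) else 1 : ℝ) : ℂ) * (p.1 μ : ℂ) := by
        intro μ
        by_cases hμ : μ = k <;>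
          · rw [hr]
            rw [negCoord_apply]
            simp [hμ]
      have e1 : f (Prod.map (⇑r) id p) =
          bggKernel n (1 - s) (r p.1) p.2 * ((r p.1) α : ℂ) * ((r p.1) β : ℂ) *
            ((r p.1) γ : ℂ) * ((r p.1) δ : ℂ) *
            fderiv ℝ (fun z => fderiv ℝ (fun z' => bggKernel n s (r p.1) z') z
              (EuclideanSpace.single j 1)) p.2 (EuclideanSpace.single i 1) := rfl
      rw [e1, h1, h2, hcoord α, hcoord β, hcoord γ, hcoord δ]
      have hsign : ((if α = k then (-1 : ℝ) else 1 : ℝ) : ℂ) *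
          ((if β = k then (-1 : ℝ) else 1 : ℝ) : ℂ)
          * ((if γ = k then (-1 : ℝ) else 1 : ℝ) : ℂ)
          * ((if δ = k then (-1 : ℝ) else 1 : ℝ) : ℂ) = -1 := by
        exact_mod_cast hk
      simp only [hf]
      linear_combination (bggKernel n (1 - s) p.1 p.2 * (p.1 α : ℂ) * (p.1 β : ℂ) *
        (p.1 γ : ℂ) * (p.1 δ : ℂ) *
        fderiv ℝ (fun z => fderiv ℝ (fun z' => bggKernel n s p.1 z') z
          (EuclideanSpace.single j 1)) p.2 (EuclideanSpace.single i 1)) * hsign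
    calc (∫ p, f p) = ∫ p, f (Prod.map (⇑r) id p) := (hmp.integral_comp hme f).symm
      _ = ∫ p, -f p := by simp only [hcomp]
      _ = -∫ p, f p := integral_neg f
  · -- i ≠ j; reflect the i-th coordinate of z
    set r := negCoord i with hr
    have hmp : MeasurePreserving
        (Prod.map (id : EuclideanSpace ℝ (Fin (4 * n)) → EuclideanSpace ℝ (Fin (4 * n))) (⇑r))
        volume volume := by
      rw [MeasureTheory.Measure.volume_eq_prod]
      exact (MeasurePreserving.id volume).prod r.measurePreserving
    have hme : MeasurableEmbedding
        (Prod.map (id : EuclideanSpace ℝ (Fin (4 * n)) → EuclideanSpace ℝ (Fin (4 * n))) (⇑r)) :=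
      MeasurableEmbedding.id.prodMap r.toHomeomorph.measurableEmbedding
    have hcomp : ∀ p, f (Prod.map id (⇑r) p) = -f p := by
      intro p
      set F : EuclideanSpace ℝ (Fin 3) → ℂ := fun z' => bggKernel n s p.1 z' with hF
      have hFr : F ∘ (r.toContinuousLinearEquiv :
          EuclideanSpace ℝ (Fin 3) → EuclideanSpace ℝ (Fin 3)) = F := by
        funext z
        exact bggKernel_isometry n s p.1 r z
      -- first derivative is invariant when applied to single j 1
      set G : EuclideanSpace ℝ (Fin 3) → ℂ :=
        fun z => fderiv ℝ F z (EuclideanSpace.single j 1) with hG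
      have hGr : ∀ z, G (r z) = G z := by
        intro z
        have h1 : fderiv ℝ (F ∘ (r.toContinuousLinearEquiv :
            EuclideanSpace ℝ (Fin 3) → EuclideanSpace ℝ (Fin 3))) z
            = (fderiv ℝ F (r.toContinuousLinearEquiv z)).comp
              (r.toContinuousLinearEquiv : EuclideanSpace ℝ (Fin 3) →L[ℝ] EuclideanSpace ℝ (Fin 3)) :=
          r.toContinuousLinearEquiv.comp_right_fderiv
        rw [hFr] at h1
        have h2 := congrArg (fun (L : EuclideanSpace ℝ (Fin 3) →L[ℝ] ℂ) =>
          L (EuclideanSpace.single j (1 : ℝ))) h1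
        simp only [ContinuousLinearMap.comp_apply, ContinuousLinearEquiv.coe_coe] at h2
        have h3 : r.toContinuousLinearEquiv (EuclideanSpace.single j (1 : ℝ))
            = EuclideanSpace.single j (1 : ℝ) := negCoord_single_ne (fun hji => hij hji.symm)
        rw [h3] at h2
        simpa [hG] using h2.symm
      -- second derivative is odd
      have hGodd : fderiv ℝ G p.2 (EuclideanSpace.single i 1)
          = -fderiv ℝ G (r p.2) (EuclideanSpace.single i 1) := by
        have hGr' : G ∘ (r.toContinuousLinearEquiv :
            EuclideanSpace ℝ (Fin 3) → EuclideanSpace ℝ (Fin 3)) = G := by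
          funext z
          exact hGr z
        have h1 : fderiv ℝ (G ∘ (r.toContinuousLinearEquiv :
            EuclideanSpace ℝ (Fin 3) → EuclideanSpace ℝ (Fin 3))) p.2
            = (fderiv ℝ G (r.toContinuousLinearEquiv p.2)).comp
              (r.toContinuousLinearEquiv : EuclideanSpace ℝ (Fin 3) →L[ℝ] EuclideanSpace ℝ (Fin 3)) :=
          r.toContinuousLinearEquiv.comp_right_fderiv
        rw [hGr'] at h1
        have h2 := congrArg (fun (L : EuclideanSpace ℝ (Fin 3) →L[ℝ] ℂ) =>
          L (EuclideanSpace.single i (1 : ℝ))) h1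
        simp only [ContinuousLinearMap.comp_apply, ContinuousLinearEquiv.coe_coe] at h2
        have h3 : r.toContinuousLinearEquiv (EuclideanSpace.single i (1 : ℝ))
            = -EuclideanSpace.single i (1 : ℝ) := negCoord_single_self i
        rw [h3, map_neg] at h2
        simpa using h2
      have h4 : bggKernel n (1 - s) p.1 (r p.2) = bggKernel n (1 - s) p.1 p.2 :=
        bggKernel_isometry n (1 - s) p.1 r p.2
      have hGodd' : fderiv ℝ G (r p.2) (EuclideanSpace.single i 1)
          = -fderiv ℝ G p.2 (EuclideanSpace.single i 1) := by
        rw [hGodd, neg_neg]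
      have e1 : f (Prod.map id (⇑r) p) =
          bggKernel n (1 - s) p.1 (r p.2) * (p.1 α : ℂ) * (p.1 β : ℂ) * (p.1 γ : ℂ) *
            (p.1 δ : ℂ) * fderiv ℝ G (r p.2) (EuclideanSpace.single i 1) := rfl
      rw [e1, h4, hGodd']
      simp only [hf]
      ring
    calc (∫ p, f p) = ∫ p, f (Prod.map id (⇑r) p) := (hmp.integral_comp hme f).symm
      _ = ∫ p, -f p := by simp only [hcomp]
      _ = -∫ p, f p := integral_neg f
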